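/- Let C be a class of matrices that contains some matrix A which is not a pseudo-copy matrix and some matrix B which is not a pseudo-transfer matrix. Then C contains a matrix having an entry of absolute value at least 2. -/

import Mathlib

/-- The permutation matrix of a permutation `σ`: its `(i, j)` entry is `1` iff `i = σ j`. -/
def permMat {m : ℕ} (σ : Equiv.Perm (Fin m)) : Matrix (Fin m) (Fin m) ℤ :=
  Matrix.of fun i j => if i = σ j then 1 else 0

/-- `extMat A n` is the block-diagonal matrix `diag(A, I_n)`. -/
def extMat {k : ℕ} (A : Matrix (Fin k) (Fin k) ℤ) (n : ℕ) :
    Matrix (Fin (k + n)) (Fin (k + n)) ℤ :=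
  Matrix.reindex finSumFinEquiv finSumFinEquiv
    (Matrix.fromBlocks A 0 0 (1 : Matrix (Fin n) (Fin n) ℤ))

/-- A *class of matrices*: a set of square integer matrices of arbitrary sizes, closed
under conjugation by permutation matrices, extension by identity blocks, containing all
identity matrices, and closed under products of equal-size matrices. -/
structure MatrixClass where
  carrier : ∀ k : ℕ, Set (Matrix (Fin k) (Fin k) ℤ)
  perm_mem : ∀ {k : ℕ} (A : Matrix (Fin k) (Fin k) ℤ), A ∈ carrier k →
    ∀ σ : Equiv.Perm (Fin k), permMat σ * A * permMat σ⁻¹ ∈ carrier k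
  ext_mem : ∀ {k : ℕ} (A : Matrix (Fin k) (Fin k) ℤ), A ∈ carrier k →
    ∀ n : ℕ, 1 ≤ n → extMat A n ∈ carrier (k + n)
  one_mem : ∀ n : ℕ, 1 ≤ n → (1 : Matrix (Fin n) (Fin n) ℤ) ∈ carrier n
  mul_mem : ∀ {k : ℕ} (A B : Matrix (Fin k) (Fin k) ℤ),
    A ∈ carrier k → B ∈ carrier k → A * B ∈ carrier k

/-- A square integer matrix is a *pseudo-transfer* matrix if all its entries lie in
`{-1, 0, 1}` and each of its columns contains at most one nonzero entry. -/
def IsPseudoTransfer {k : ℕ} (A : Matrix (Fin k) (Fin k) ℤ) : Prop :=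
  (∀ i j, A i j = -1 ∨ A i j = 0 ∨ A i j = 1) ∧
  ∀ j i₁ i₂, A i₁ j ≠ 0 → A i₂ j ≠ 0 → i₁ = i₂

/-- A square integer matrix is a *pseudo-copy* matrix if all its entries lie in
`{-1, 0, 1}` and each of its rows contains at most one nonzero entry. -/
def IsPseudoCopy {k : ℕ} (A : Matrix (Fin k) (Fin k) ℤ) : Prop :=
  (∀ i j, A i j = -1 ∨ A i j = 0 ∨ A i j = 1) ∧
  ∀ i j₁ j₂, A i j₁ ≠ 0 → A i j₂ ≠ 0 → j₁ = j₂

theorem Equiv.Perm.apply_inv_self {α : Type*} (f : Equiv.Perm α) (x : α) : f (f⁻¹ x) = x :=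
  Equiv.apply_symm_apply f x

theorem Equiv.Perm.inv_apply_self {α : Type*} (f : Equiv.Perm α) (x : α) : f⁻¹ (f x) = x :=
  Equiv.symm_apply_apply f x

namespace ClassNorm

open Function

/-- Conjugated matrix. -/
def conjMat {N : ℕ} (σ : Equiv.Perm (Fin N)) (M : Matrix (Fin N) (Fin N) ℤ) :
    Matrix (Fin N) (Fin N) ℤ :=
  Matrix.of fun p q => M (σ⁻¹ p) (σ⁻¹ q)

lemma permMat_mul {N : ℕ} (σ : Equiv.Perm (Fin N)) (M : Matrix (Fin N) (Fin N) ℤ) :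
    permMat σ * M = Matrix.of fun p q => M (σ⁻¹ p) q := by
  ext p q
  rw [Matrix.mul_apply]
  have h : ∀ m : Fin N, permMat σ p m * M m q = if m = σ⁻¹ p then M m q else 0 := by
    intro m
    rcases eq_or_ne m (σ⁻¹ p) with rfl | h
    · simp [permMat]
    · have h2 : p ≠ σ m := by
        intro hp; exact h (by rw [hp]; simp)
      simp [permMat, h2, h]
      intro hm; exact absurd hm h
  simp_rw [h]
  simp

lemma mul_permMat {N : ℕ} (σ : Equiv.Perm (Fin N)) (M : Matrix (Fin N) (Fin N) ℤ) :
    M * permMat σ = Matrix.of fun p q => M p (σ q) := by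
  ext p q
  rw [Matrix.mul_apply]
  have h : ∀ m : Fin N, M p m * permMat σ m q = if m = σ q then M p m else 0 := by
    intro m
    rcases eq_or_ne m (σ q) with rfl | h
    · simp [permMat]
    · simp [permMat, h]
  simp_rw [h]
  simp

lemma conj_eq {N : ℕ} (σ : Equiv.Perm (Fin N)) (M : Matrix (Fin N) (Fin N) ℤ) :
    permMat σ * M * permMat σ⁻¹ = conjMat σ M := by
  rw [permMat_mul, mul_permMat]
  ext p q
  simp [conjMat]

lemma conjMat_mem {N : ℕ} (C : MatrixClass) (σ : Equiv.Perm (Fin N))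
    {M : Matrix (Fin N) (Fin N) ℤ} (h : M ∈ C.carrier N) : conjMat σ M ∈ C.carrier N := by
  rw [← conj_eq]; exact C.perm_mem M h σ

/-- `M` padded to size `N` with an identity block. -/
def padMat {k : ℕ} (M : Matrix (Fin k) (Fin k) ℤ) (N : ℕ) : Matrix (Fin N) (Fin N) ℤ :=
  Matrix.of fun p q =>
    if hp : (p : ℕ) < k then
      if hq : (q : ℕ) < k then M ⟨p, hp⟩ ⟨q, hq⟩ else 0
    else if (p : ℕ) = (q : ℕ) then 1 else 0

lemma extMat_eq_padMat {k n : ℕ} (M : Matrix (Fin k) (Fin k) ℤ) :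
    extMat M n = padMat M (k + n) := by
  ext p q
  have key : ∀ (r : Fin (k + n)) (hr : (r : ℕ) < k),
      finSumFinEquiv.symm r = Sum.inl ⟨r, hr⟩ := by
    intro r hr
    rw [Equiv.symm_apply_eq, finSumFinEquiv_apply_left]
    exact Fin.ext rfl
  have key2 : ∀ (r : Fin (k + n)) (hr : k ≤ (r : ℕ)),
      finSumFinEquiv.symm r = Sum.inr ⟨r - k, by omega⟩ := by
    intro r hr
    rw [Equiv.symm_apply_eq, finSumFinEquiv_apply_right]
    exact Fin.ext (by simp [Fin.coe_natAdd]; omega)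
  rw [extMat, Matrix.reindex_apply, Matrix.submatrix_apply]
  rcases lt_or_ge (p : ℕ) k with hp | hp <;> rcases lt_or_ge (q : ℕ) k with hq | hq
  · rw [key p hp, key q hq]
    simp [padMat, hp, hq]
  · rw [key p hp, key2 q hq]
    simp [padMat, hp, not_lt.mpr hq]
  · rw [key2 p hp, key q hq]
    simp only [padMat, Matrix.of_apply, dif_neg (not_lt.mpr hp), Matrix.fromBlocks_apply₂₁]
    rw [if_neg (by omega)]
    rfl
  · rw [key2 p hp, key2 q hq]
    simp only [padMat, Matrix.of_apply, dif_neg (not_lt.mpr hp), Matrix.fromBlocks_apply₂₂,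
      Matrix.one_apply, Fin.ext_iff]
    by_cases h : (p : ℕ) = q
    · rw [if_pos (by omega), if_pos h]
    · rw [if_neg (by omega), if_neg h]

lemma padMat_mem {k N : ℕ} (C : MatrixClass) {M : Matrix (Fin k) (Fin k) ℤ}
    (h : M ∈ C.carrier k) (hkN : k < N) : padMat M N ∈ C.carrier N := by
  obtain ⟨n, hn, rfl⟩ : ∃ n, 1 ≤ n ∧ N = k + n := ⟨N - k, by omega, by omega⟩
  rw [← extMat_eq_padMat]
  exact C.ext_mem M h n hn

lemma exists_perm_extend {m n : ℕ} (g : Fin m → Fin n) (hg : Function.Injective g)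
    (hmn : m ≤ n) :
    ∃ σ : Equiv.Perm (Fin n), ∀ x : Fin m, σ ⟨x.1, lt_of_lt_of_le x.2 hmn⟩ = g x := by
  classical
  set f : Fin m → Fin n := fun x => ⟨x.1, lt_of_lt_of_le x.2 hmn⟩ with hf
  have hfinj : Function.Injective f := by
    intro a b h
    have h2 := congrArg Fin.val h
    simp only [hf] at h2
    exact Fin.ext h2
  have hcard : Fintype.card ((Set.range f)ᶜ : Set (Fin n)) =
      Fintype.card ((Set.range g)ᶜ : Set (Fin n)) := by
    rw [Fintype.card_compl_set, Fintype.card_compl_set,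
      Set.card_range_of_injective hfinj, Set.card_range_of_injective hg]
  let e₁ : (Set.range f) ≃ (Set.range g) :=
    (Equiv.ofInjective f hfinj).symm.trans (Equiv.ofInjective g hg)
  let e₂ : ((Set.range f)ᶜ : Set (Fin n)) ≃ ((Set.range g)ᶜ : Set (Fin n)) :=
    Fintype.equivOfCardEq hcard
  refine ⟨(Equiv.Set.sumCompl (Set.range f)).symm.trans
    ((e₁.sumCongr e₂).trans (Equiv.Set.sumCompl (Set.range g))), ?_⟩
  intro x
  have hx : f x ∈ Set.range f := ⟨x, rfl⟩
  have h1 : (Equiv.Set.sumCompl (Set.range f)).symm (f x) = Sum.inl ⟨f x, hx⟩ :=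
    Equiv.Set.sumCompl_symm_apply_of_mem hx
  have h2 : e₁ ⟨f x, hx⟩ = ⟨g x, ⟨x, rfl⟩⟩ := by
    have : (⟨f x, hx⟩ : Set.range f) = Equiv.ofInjective f hfinj x := by
      exact Subtype.ext rfl
    simp only [e₁, Equiv.trans_apply, this, Equiv.symm_apply_apply]
    exact Subtype.ext rfl
  show (Equiv.Set.sumCompl (Set.range g)) ((e₁.sumCongr e₂) ((Equiv.Set.sumCompl (Set.range f)).symm (f x))) = g x
  rw [h1]
  simp only [Equiv.sumCongr_apply, Sum.map_inl, h2]
  exact Equiv.Set.sumCompl_apply_inl _ _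

/-- The involution of `Fin (3*N)` swapping the first two blocks of size `N`. -/
def tripSwap (N : ℕ) : Equiv.Perm (Fin (3 * N)) :=
  Function.Involutive.toPerm
    (fun p => if h : (p : ℕ) < N then ⟨p + N, by omega⟩
      else if h2 : (p : ℕ) < 2 * N then ⟨p - N, by omega⟩ else p)
    (by
      intro p
      dsimp only
      by_cases h : (p : ℕ) < N
      · rw [dif_pos h, dif_neg (by simp only [Fin.val_mk]; omega),
          dif_pos (by simp only [Fin.val_mk]; omega)]
        exact Fin.ext (by simp only [Fin.val_mk]; omega)
      · by_cases h2 : (p : ℕ) < 2 * N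
        · rw [dif_neg h, dif_pos h2, dif_pos (by simp only [Fin.val_mk]; omega)]
          exact Fin.ext (by simp only [Fin.val_mk]; omega)
        · rw [dif_neg h, dif_neg h2, dif_neg h, dif_neg h2])

lemma tripSwap_apply {N : ℕ} (p : Fin (3 * N)) :
    tripSwap N p = if h : (p : ℕ) < N then ⟨p + N, by omega⟩
      else if h2 : (p : ℕ) < 2 * N then ⟨p - N, by omega⟩ else p := rfl

lemma tripSwap_inv {N : ℕ} : (tripSwap N)⁻¹ = tripSwap N := by
  ext p
  rfl

lemma padMat_apply_lt {k N : ℕ} (M : Matrix (Fin k) (Fin k) ℤ) (p q : Fin N)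
    (hp : (p : ℕ) < k) (hq : (q : ℕ) < k) : padMat M N p q = M ⟨p, hp⟩ ⟨q, hq⟩ := by
  simp [padMat, hp, hq]

lemma padMat_apply_zero {k N : ℕ} (M : Matrix (Fin k) (Fin k) ℤ) (p q : Fin N)
    (hp : (p : ℕ) < k) (hq : ¬ (q : ℕ) < k) : padMat M N p q = 0 := by
  simp [padMat, hp, hq]

lemma padMat_apply_id {k N : ℕ} (M : Matrix (Fin k) (Fin k) ℤ) (p q : Fin N)
    (hp : ¬ (p : ℕ) < k) : padMat M N p q = if (p : ℕ) = (q : ℕ) then 1 else 0 := by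
  simp [padMat, hp]

lemma tripSwap_lo {N : ℕ} (p : Fin (3 * N)) (hp : (p : ℕ) < N) :
    tripSwap N p = ⟨(p : ℕ) + N, by omega⟩ := by
  rw [tripSwap_apply, dif_pos hp]

lemma tripSwap_mid {N : ℕ} (p : Fin (3 * N)) (h1 : ¬ (p : ℕ) < N) (h2 : (p : ℕ) < 2 * N) :
    tripSwap N p = ⟨(p : ℕ) - N, by omega⟩ := by
  rw [tripSwap_apply, dif_neg h1, dif_pos h2]

lemma tripSwap_hi {N : ℕ} (p : Fin (3 * N)) (h2 : ¬ (p : ℕ) < 2 * N) :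
    tripSwap N p = p := by
  rw [tripSwap_apply, dif_neg (by omega), dif_neg h2]

lemma conj_trip_pad {N : ℕ} (M : Matrix (Fin N) (Fin N) ℤ) (p q : Fin (3 * N)) :
    conjMat (tripSwap N) (padMat M (3 * N)) p q =
      if hp : (p : ℕ) < N then (if (p : ℕ) = (q : ℕ) then 1 else 0)
      else if hp2 : (p : ℕ) < 2 * N then
        (if hq : N ≤ (q : ℕ) ∧ (q : ℕ) < 2 * N then
          M ⟨(p : ℕ) - N, by omega⟩ ⟨(q : ℕ) - N, by omega⟩ else 0)
      else (if (p : ℕ) = (q : ℕ) then 1 else 0) := by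
  show padMat M (3 * N) ((tripSwap N)⁻¹ p) ((tripSwap N)⁻¹ q) = _
  rw [tripSwap_inv]
  rcases Nat.lt_or_ge (p : ℕ) N with hp | hp'
  · rw [tripSwap_lo p hp, dif_pos hp,
      padMat_apply_id _ _ _ (by simp only [Fin.val_mk]; omega)]
    rcases Nat.lt_or_ge (q : ℕ) N with hq | hq'
    · rw [tripSwap_lo q hq]
      simp only [Fin.val_mk]
      exact if_congr (by omega) rfl rfl
    · rcases Nat.lt_or_ge (q : ℕ) (2 * N) with hq2 | hq2'
      · rw [tripSwap_mid q (by omega) hq2]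
        simp only [Fin.val_mk]
        rw [if_neg (by omega), if_neg (by omega)]
      · rw [tripSwap_hi q (by omega)]
        simp only [Fin.val_mk]
        rw [if_neg (by omega), if_neg (by omega)]
  · rcases Nat.lt_or_ge (p : ℕ) (2 * N) with hp2 | hp2'
    · rw [tripSwap_mid p (by omega) hp2, dif_neg (by omega), dif_pos hp2]
      rcases Nat.lt_or_ge (q : ℕ) N with hq | hq'
      · rw [tripSwap_lo q hq,
          padMat_apply_zero _ _ _ (by simp only [Fin.val_mk]; omega)
            (by simp only [Fin.val_mk]; omega),
          dif_neg (by omega)]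
      · rcases Nat.lt_or_ge (q : ℕ) (2 * N) with hq2 | hq2'
        · rw [tripSwap_mid q (by omega) hq2,
            padMat_apply_lt (k := N) _ _ _ (by simp only [Fin.val_mk]; omega)
              (by simp only [Fin.val_mk]; omega),
            dif_pos (show N ≤ (q : ℕ) ∧ (q : ℕ) < 2 * N from ⟨hq', hq2⟩)]
        · rw [tripSwap_hi q (by omega),
            padMat_apply_zero _ _ _ (by simp only [Fin.val_mk]; omega) (by omega),
            dif_neg (by omega)]
    · rw [tripSwap_hi p (by omega), dif_neg (by omega), dif_neg (by omega),
        padMat_apply_id _ _ _ (by omega)]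
      rcases Nat.lt_or_ge (q : ℕ) N with hq | hq'
      · rw [tripSwap_lo q hq]
        simp only [Fin.val_mk]
        rw [if_neg (by omega), if_neg (by omega)]
      · rcases Nat.lt_or_ge (q : ℕ) (2 * N) with hq2 | hq2'
        · rw [tripSwap_mid q (by omega) hq2]
          simp only [Fin.val_mk]
          rw [if_neg (by omega), if_neg (by omega)]
        · rw [tripSwap_hi q (by omega)]

lemma dbl_apply {N : ℕ} (M : Matrix (Fin N) (Fin N) ℤ) (p q : Fin (3 * N)) :
    (padMat M (3 * N) * conjMat (tripSwap N) (padMat M (3 * N))) p q =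
      if hp : (p : ℕ) < N then (if hq : (q : ℕ) < N then M ⟨p, hp⟩ ⟨q, hq⟩ else 0)
      else if hp2 : (p : ℕ) < 2 * N then
        (if hq : N ≤ (q : ℕ) ∧ (q : ℕ) < 2 * N then
          M ⟨(p : ℕ) - N, by omega⟩ ⟨(q : ℕ) - N, by omega⟩ else 0)
      else (if (p : ℕ) = (q : ℕ) then 1 else 0) := by
  rw [Matrix.mul_apply]
  by_cases hp : (p : ℕ) < N
  · rw [dif_pos hp]
    by_cases hq : (q : ℕ) < N
    · rw [dif_pos hq]
      have hz : ∀ m : Fin (3 * N), m ≠ ⟨(q : ℕ), by omega⟩ →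
          padMat M (3 * N) p m * conjMat (tripSwap N) (padMat M (3 * N)) m q = 0 := by
        intro m hm
        by_cases hmN : (m : ℕ) < N
        · rw [conj_trip_pad, dif_pos hmN, if_neg (fun hc => hm (Fin.ext hc)), mul_zero]
        · rw [padMat_apply_zero M p m hp hmN, zero_mul]
      rw [Fintype.sum_eq_single _ hz, padMat_apply_lt M p _ hp (by simp only [Fin.val_mk]; exact hq), conj_trip_pad,
        dif_pos (show ((⟨(q : ℕ), by omega⟩ : Fin (3 * N)) : ℕ) < N by
          simp only [Fin.val_mk]; exact hq),
        if_pos rfl, mul_one]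
    · rw [dif_neg hq]
      apply Finset.sum_eq_zero
      intro m _
      by_cases hmN : (m : ℕ) < N
      · rw [conj_trip_pad, dif_pos hmN, if_neg (by omega), mul_zero]
      · rw [padMat_apply_zero M p m hp hmN, zero_mul]
  · have hz : ∀ m : Fin (3 * N), m ≠ p →
        padMat M (3 * N) p m * conjMat (tripSwap N) (padMat M (3 * N)) m q = 0 := by
      intro m hm
      rw [padMat_apply_id M p m hp, if_neg (fun hc => hm (Fin.ext hc.symm)), zero_mul]
    rw [Fintype.sum_eq_single _ hz, padMat_apply_id M p p hp, if_pos rfl, one_mul,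
      conj_trip_pad, dif_neg hp, dif_neg hp]

/-- `diag(M, M, I)` of size `3 * N`. -/
def dblM {N : ℕ} (M : Matrix (Fin N) (Fin N) ℤ) : Matrix (Fin (3 * N)) (Fin (3 * N)) ℤ :=
  padMat M (3 * N) * conjMat (tripSwap N) (padMat M (3 * N))

variable {N : ℕ} {M : Matrix (Fin N) (Fin N) ℤ} {a b : Fin (3 * N)}

lemma dblM_mem (C : MatrixClass) (hM : M ∈ C.carrier N) (hN : 0 < N) :
    dblM M ∈ C.carrier (3 * N) :=
  C.mul_mem _ _ (padMat_mem C hM (by omega)) (conjMat_mem C _ (padMat_mem C hM (by omega)))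

lemma dblM_ll (ha : (a : ℕ) < N) (hb : (b : ℕ) < N) :
    dblM M a b = M ⟨a, ha⟩ ⟨b, hb⟩ := by
  rw [dblM, dbl_apply, dif_pos ha, dif_pos hb]

lemma dblM_mm (ha : N ≤ (a : ℕ)) (ha2 : (a : ℕ) < 2 * N) (hb : N ≤ (b : ℕ))
    (hb2 : (b : ℕ) < 2 * N) :
    dblM M a b = M ⟨(a : ℕ) - N, by omega⟩ ⟨(b : ℕ) - N, by omega⟩ := by
  rw [dblM, dbl_apply, dif_neg (by omega), dif_pos ha2, dif_pos (⟨hb, hb2⟩ : N ≤ (b : ℕ) ∧ (b : ℕ) < 2 * N)]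

lemma dblM_zero_lo (ha : (a : ℕ) < N) (hb : ¬ (b : ℕ) < N) : dblM M a b = 0 := by
  rw [dblM, dbl_apply, dif_pos ha, dif_neg hb]

lemma dblM_zero_mid (ha : N ≤ (a : ℕ)) (ha2 : (a : ℕ) < 2 * N)
    (hb : ¬ (N ≤ (b : ℕ) ∧ (b : ℕ) < 2 * N)) : dblM M a b = 0 := by
  rw [dblM, dbl_apply, dif_neg (by omega), dif_pos ha2, dif_neg hb]

lemma dblM_zero_hi (ha : 2 * N ≤ (a : ℕ)) (hab : (a : ℕ) ≠ (b : ℕ)) : dblM M a b = 0 := by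
  rw [dblM, dbl_apply, dif_neg (by omega), dif_neg (by omega), if_neg hab]

lemma dblM_zero_col_lo (hb : (b : ℕ) < N) (ha : ¬ (a : ℕ) < N) : dblM M a b = 0 := by
  rw [dblM, dbl_apply, dif_neg ha]
  by_cases h2 : (a : ℕ) < 2 * N
  · rw [dif_pos h2, dif_neg (by omega)]
  · rw [dif_neg h2, if_neg (by omega)]

lemma dblM_zero_col_mid (hb : N ≤ (b : ℕ)) (hb2 : (b : ℕ) < 2 * N)
    (ha : ¬ (N ≤ (a : ℕ) ∧ (a : ℕ) < 2 * N)) : dblM M a b = 0 := by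
  rw [dblM, dbl_apply]
  by_cases h1 : (a : ℕ) < N
  · rw [dif_pos h1, dif_neg (by omega)]
  · rw [dif_neg h1, dif_neg (by omega), if_neg (by omega)]

lemma dblM_zero_col_hi (hb : 2 * N ≤ (b : ℕ)) (hab : (a : ℕ) ≠ (b : ℕ)) : dblM M a b = 0 := by
  rw [dblM, dbl_apply]
  by_cases h1 : (a : ℕ) < N
  · rw [dif_pos h1, dif_neg (by omega)]
  · by_cases h2 : (a : ℕ) < 2 * N
    · rw [dif_neg h1, dif_pos h2, dif_neg (by omega)]
    · rw [dif_neg h1, dif_neg h2, if_neg hab]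

def RowPairC (C : MatrixClass) (x y : ℤ) : Prop :=
  ∃ (N : ℕ) (M : Matrix (Fin N) (Fin N) ℤ), M ∈ C.carrier N ∧
    ∃ (r q₁ q₂ : Fin N), q₁ ≠ q₂ ∧ M r q₁ = x ∧ M r q₂ = y

def ColPairC (C : MatrixClass) (x y : ℤ) : Prop :=
  ∃ (N : ℕ) (M : Matrix (Fin N) (Fin N) ℤ), M ∈ C.carrier N ∧
    ∃ (c p₁ p₂ : Fin N), p₁ ≠ p₂ ∧ M p₁ c = x ∧ M p₂ c = y

set_option maxHeartbeats 1000000 in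
lemma rowdouble (C : MatrixClass) {x y : ℤ} (hx : x = 1 ∨ x = -1) (hy : y = 1 ∨ y = -1)
    (h : RowPairC C x y) : RowPairC C 1 1 := by
  obtain ⟨N, M, hM, r, q₁, q₂, hqne, hq1, hq2⟩ := h
  have hrN : (r : ℕ) < N := r.isLt
  have h1N : (q₁ : ℕ) < N := q₁.isLt
  have h2N : (q₂ : ℕ) < N := q₂.isLt
  have hN : 0 < N := by omega
  have hvalne : (q₁ : ℕ) ≠ (q₂ : ℕ) := fun hc => hqne (Fin.ext hc)
  have hb1 : (r : ℕ) < 3 * N := by omega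
  have hb2 : (q₁ : ℕ) < 3 * N := by omega
  have hb3 : (q₂ : ℕ) < 3 * N := by omega
  have hb4 : N + (r : ℕ) < 3 * N := by omega
  have hb5 : N + (q₂ : ℕ) < 3 * N := by omega
  set g : Fin N → Fin (3 * N) := fun u =>
    if u = q₁ then ⟨(r : ℕ), hb1⟩ else if u = q₂ then ⟨N + (r : ℕ), hb4⟩
    else ⟨2 * N + (u : ℕ), by omega⟩ with hg
  have hgval : ∀ u : Fin N, ((g u : Fin (3 * N)) : ℕ) =
      if u = q₁ then (r : ℕ) else if u = q₂ then N + (r : ℕ) else 2 * N + (u : ℕ) := by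
    intro u; rw [hg]; dsimp only; split_ifs <;> rfl
  have hgq1 : g q₁ = ⟨(r : ℕ), hb1⟩ :=
    Fin.ext (by rw [hgval, if_pos rfl])
  have hgq2 : g q₂ = ⟨N + (r : ℕ), hb4⟩ :=
    Fin.ext (by rw [hgval, if_neg hqne.symm, if_pos rfl])
  have hginj : Function.Injective g := by
    intro u v huv
    have hv : ((g u : Fin (3 * N)) : ℕ) = ((g v : Fin (3 * N)) : ℕ) := congrArg Fin.val huv
    rw [hgval, hgval] at hv
    have huN : (u : ℕ) < N := u.isLt
    have hvN : (v : ℕ) < N := v.isLt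
    split_ifs at hv with h1 h2 h3 h4 h5 h6 h7 h8 h9 <;>
      first
        | (exact h1.trans h2.symm)
        | (exact h3.trans h6.symm)
        | (exact h3.trans h5.symm)
        | (exact h1.trans h4.symm)
        | (exact Fin.ext (by omega))
        | (exfalso; omega)
  obtain ⟨σ, hσ⟩ := exists_perm_extend g hginj (by omega)
  have hPmem : padMat M (3 * N) ∈ C.carrier (3 * N) := padMat_mem C hM (by omega)
  have hRmem : padMat M (3 * N) * conjMat σ⁻¹ (dblM M) ∈ C.carrier (3 * N) :=
    C.mul_mem _ _ hPmem (conjMat_mem C _ (dblM_mem C hM hN))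
  have conjD : ∀ m q : Fin (3 * N), conjMat σ⁻¹ (dblM M) m q = dblM M (σ m) (σ q) := by
    intro m q; simp [conjMat]
  refine ⟨3 * N, padMat M (3 * N) * conjMat σ⁻¹ (dblM M), hRmem,
    ⟨(r : ℕ), hb1⟩, σ⁻¹ ⟨(q₁ : ℕ), hb2⟩, σ⁻¹ ⟨N + (q₂ : ℕ), hb5⟩, ?_, ?_, ?_⟩
  · intro hc
    have := congrArg Fin.val (σ⁻¹.injective hc)
    simp only [Fin.val_mk] at this
    omega
  · -- entry = x * x
    rw [Matrix.mul_apply]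
    have hz : ∀ m : Fin (3 * N), m ≠ ⟨(q₁ : ℕ), hb2⟩ →
        padMat M (3 * N) ⟨(r : ℕ), hb1⟩ m *
          conjMat σ⁻¹ (dblM M) m (σ⁻¹ ⟨(q₁ : ℕ), hb2⟩) = 0 := by
      intro m hm
      by_cases hmN : (m : ℕ) < N
      · have hs : σ m = g ⟨(m : ℕ), hmN⟩ := hσ ⟨(m : ℕ), hmN⟩
        rw [conjD, hs, Equiv.Perm.apply_inv_self]
        by_cases hu1 : (⟨(m : ℕ), hmN⟩ : Fin N) = q₁
        · exact absurd (Fin.ext (by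
            have := congrArg Fin.val hu1
            simp only [Fin.val_mk] at this ⊢
            exact this)) hm
        · by_cases hu2 : (⟨(m : ℕ), hmN⟩ : Fin N) = q₂
          · rw [dblM_zero_mid (a := g ⟨(m : ℕ), hmN⟩) (by rw [hgval, if_neg hu1, if_pos hu2]; omega)
              (by rw [hgval, if_neg hu1, if_pos hu2]; omega)
              (by simp only [Fin.val_mk]; omega), mul_zero]
          · rw [dblM_zero_hi (a := g ⟨(m : ℕ), hmN⟩)
              (by rw [hgval, if_neg hu1, if_neg hu2]; omega)
              (by rw [hgval, if_neg hu1, if_neg hu2]; simp only [Fin.val_mk]; omega), mul_zero]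
      · rw [padMat_apply_zero _ _ _ (by simp only [Fin.val_mk]; omega) hmN, zero_mul]
    rw [Fintype.sum_eq_single _ hz]
    have hs : σ (⟨(q₁ : ℕ), hb2⟩ : Fin (3 * N)) = g q₁ := hσ q₁
    rw [conjD, hs, Equiv.Perm.apply_inv_self]
    have e1 : padMat M (3 * N) (⟨(r : ℕ), hb1⟩ : Fin (3 * N)) ⟨(q₁ : ℕ), hb2⟩ = x := by
      rw [padMat_apply_lt _ _ _ (by simp only [Fin.val_mk]; omega)
        (by simp only [Fin.val_mk]; omega)]
      rw [show (⟨((⟨(r : ℕ), hb1⟩ : Fin (3 * N)) : ℕ), by simp only [Fin.val_mk]; omega⟩ : Fin N) = r from Fin.ext (by simp only [Fin.val_mk])]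
      rw [show (⟨((⟨(q₁ : ℕ), hb2⟩ : Fin (3 * N)) : ℕ), by simp only [Fin.val_mk]; omega⟩ : Fin N) = q₁ from Fin.ext (by simp only [Fin.val_mk])]
      exact hq1
    have e2 : dblM M (⟨(r : ℕ), hb1⟩ : Fin (3 * N)) (⟨(q₁ : ℕ), hb2⟩ : Fin (3 * N)) = x := by
      rw [dblM_ll (by simp only [Fin.val_mk]; omega) (by simp only [Fin.val_mk]; omega)]
      rw [show M ⟨((⟨(r : ℕ), hb1⟩ : Fin (3 * N)) : ℕ), by simp only [Fin.val_mk]; omega⟩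
            ⟨((⟨(q₁ : ℕ), hb2⟩ : Fin (3 * N)) : ℕ), by simp only [Fin.val_mk]; omega⟩
          = M r q₁ by congr 1 <;> exact Fin.ext (by simp only [Fin.val_mk])]
      exact hq1
    rw [e1, hgq1, e2]
    rcases hx with rfl | rfl <;> norm_num
  · -- entry = y * y
    rw [Matrix.mul_apply]
    have hz : ∀ m : Fin (3 * N), m ≠ ⟨(q₂ : ℕ), hb3⟩ →
        padMat M (3 * N) ⟨(r : ℕ), hb1⟩ m *
          conjMat σ⁻¹ (dblM M) m (σ⁻¹ ⟨N + (q₂ : ℕ), hb5⟩) = 0 := by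
      intro m hm
      by_cases hmN : (m : ℕ) < N
      · have hs : σ m = g ⟨(m : ℕ), hmN⟩ := hσ ⟨(m : ℕ), hmN⟩
        rw [conjD, hs, Equiv.Perm.apply_inv_self]
        by_cases hu2 : (⟨(m : ℕ), hmN⟩ : Fin N) = q₂
        · exact absurd (Fin.ext (by
            have := congrArg Fin.val hu2
            simp only [Fin.val_mk] at this ⊢
            exact this)) hm
        · by_cases hu1 : (⟨(m : ℕ), hmN⟩ : Fin N) = q₁
          · rw [dblM_zero_lo (a := g ⟨(m : ℕ), hmN⟩)
              (by rw [hgval, if_pos hu1]; omega)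
              (by simp only [Fin.val_mk]; omega), mul_zero]
          · rw [dblM_zero_hi (a := g ⟨(m : ℕ), hmN⟩)
              (by rw [hgval, if_neg hu1, if_neg hu2]; omega)
              (by rw [hgval, if_neg hu1, if_neg hu2]; simp only [Fin.val_mk]; omega), mul_zero]
      · rw [padMat_apply_zero _ _ _ (by simp only [Fin.val_mk]; omega) hmN, zero_mul]
    rw [Fintype.sum_eq_single _ hz]
    have hs : σ (⟨(q₂ : ℕ), hb3⟩ : Fin (3 * N)) = g q₂ := hσ q₂
    rw [conjD, hs, Equiv.Perm.apply_inv_self]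
    have e1 : padMat M (3 * N) (⟨(r : ℕ), hb1⟩ : Fin (3 * N)) ⟨(q₂ : ℕ), hb3⟩ = y := by
      rw [padMat_apply_lt _ _ _ (by simp only [Fin.val_mk]; omega)
        (by simp only [Fin.val_mk]; omega)]
      rw [show M ⟨((⟨(r : ℕ), hb1⟩ : Fin (3 * N)) : ℕ), by simp only [Fin.val_mk]; omega⟩
            ⟨((⟨(q₂ : ℕ), hb3⟩ : Fin (3 * N)) : ℕ), by simp only [Fin.val_mk]; omega⟩
          = M r q₂ by congr 1 <;> exact Fin.ext (by simp only [Fin.val_mk])]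
      exact hq2
    have e2 : dblM M (⟨N + (r : ℕ), hb4⟩ : Fin (3 * N))
        (⟨N + (q₂ : ℕ), hb5⟩ : Fin (3 * N)) = y := by
      rw [dblM_mm (by simp only [Fin.val_mk]; omega) (by simp only [Fin.val_mk]; omega)
        (by simp only [Fin.val_mk]; omega) (by simp only [Fin.val_mk]; omega)]
      rw [show M ⟨((⟨N + (r : ℕ), hb4⟩ : Fin (3 * N)) : ℕ) - N, by simp only [Fin.val_mk]; omega⟩
            ⟨((⟨N + (q₂ : ℕ), hb5⟩ : Fin (3 * N)) : ℕ) - N, by simp only [Fin.val_mk]; omega⟩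
          = M r q₂ by congr 1 <;> exact Fin.ext (by simp only [Fin.val_mk]; omega)]
      exact hq2
    rw [e1, hgq2, e2]
    rcases hy with rfl | rfl <;> norm_num
set_option maxHeartbeats 1000000 in
lemma coldouble (C : MatrixClass) {x y : ℤ} (hx : x = 1 ∨ x = -1) (hy : y = 1 ∨ y = -1)
    (h : ColPairC C x y) : ColPairC C 1 1 := by
  obtain ⟨N, M, hM, c, p₁, p₂, hpne, hp1, hp2⟩ := h
  have hcN : (c : ℕ) < N := c.isLt
  have h1N : (p₁ : ℕ) < N := p₁.isLt
  have h2N : (p₂ : ℕ) < N := p₂.isLt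
  have hN : 0 < N := by omega
  have hvalne : (p₁ : ℕ) ≠ (p₂ : ℕ) := fun hc => hpne (Fin.ext hc)
  have hb1 : (c : ℕ) < 3 * N := by omega
  have hb2 : (p₁ : ℕ) < 3 * N := by omega
  have hb3 : (p₂ : ℕ) < 3 * N := by omega
  have hb4 : N + (c : ℕ) < 3 * N := by omega
  have hb5 : N + (p₂ : ℕ) < 3 * N := by omega
  set g : Fin N → Fin (3 * N) := fun u =>
    if u = p₁ then ⟨(c : ℕ), hb1⟩ else if u = p₂ then ⟨N + (c : ℕ), hb4⟩
    else ⟨2 * N + (u : ℕ), by omega⟩ with hg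
  have hgval : ∀ u : Fin N, ((g u : Fin (3 * N)) : ℕ) =
      if u = p₁ then (c : ℕ) else if u = p₂ then N + (c : ℕ) else 2 * N + (u : ℕ) := by
    intro u; rw [hg]; dsimp only; split_ifs <;> rfl
  have hgp1 : g p₁ = ⟨(c : ℕ), hb1⟩ :=
    Fin.ext (by rw [hgval, if_pos rfl])
  have hgp2 : g p₂ = ⟨N + (c : ℕ), hb4⟩ :=
    Fin.ext (by rw [hgval, if_neg hpne.symm, if_pos rfl])
  have hginj : Function.Injective g := by
    intro u v huv
    have hv : ((g u : Fin (3 * N)) : ℕ) = ((g v : Fin (3 * N)) : ℕ) := congrArg Fin.val huv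
    rw [hgval, hgval] at hv
    have huN : (u : ℕ) < N := u.isLt
    have hvN : (v : ℕ) < N := v.isLt
    split_ifs at hv with h1 h2 h3 h4 h5 h6 h7 h8 h9 <;>
      first
        | (exact h1.trans h2.symm)
        | (exact h3.trans h6.symm)
        | (exact h3.trans h5.symm)
        | (exact h1.trans h4.symm)
        | (exact Fin.ext (by omega))
        | (exfalso; omega)
  obtain ⟨σ, hσ⟩ := exists_perm_extend g hginj (by omega)
  have hPmem : padMat M (3 * N) ∈ C.carrier (3 * N) := padMat_mem C hM (by omega)
  have hVmem : conjMat σ⁻¹ (dblM M) * padMat M (3 * N) ∈ C.carrier (3 * N) :=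
    C.mul_mem _ _ (conjMat_mem C _ (dblM_mem C hM hN)) hPmem
  have conjD : ∀ m q : Fin (3 * N), conjMat σ⁻¹ (dblM M) m q = dblM M (σ m) (σ q) := by
    intro m q; simp [conjMat]
  refine ⟨3 * N, conjMat σ⁻¹ (dblM M) * padMat M (3 * N), hVmem,
    ⟨(c : ℕ), hb1⟩, σ⁻¹ ⟨(p₁ : ℕ), hb2⟩, σ⁻¹ ⟨N + (p₂ : ℕ), hb5⟩, ?_, ?_, ?_⟩
  · intro hcc
    have := congrArg Fin.val (σ⁻¹.injective hcc)
    simp only [Fin.val_mk] at this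
    omega
  · -- entry = x * x
    rw [Matrix.mul_apply]
    have hz : ∀ m : Fin (3 * N), m ≠ ⟨(p₁ : ℕ), hb2⟩ →
        conjMat σ⁻¹ (dblM M) (σ⁻¹ ⟨(p₁ : ℕ), hb2⟩) m *
          padMat M (3 * N) m ⟨(c : ℕ), hb1⟩ = 0 := by
      intro m hm
      by_cases hmN : (m : ℕ) < N
      · have hs : σ m = g ⟨(m : ℕ), hmN⟩ := hσ ⟨(m : ℕ), hmN⟩
        rw [conjD, hs, Equiv.Perm.apply_inv_self]
        by_cases hu1 : (⟨(m : ℕ), hmN⟩ : Fin N) = p₁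
        · exact absurd (Fin.ext (by
            have := congrArg Fin.val hu1
            simp only [Fin.val_mk] at this ⊢
            exact this)) hm
        · by_cases hu2 : (⟨(m : ℕ), hmN⟩ : Fin N) = p₂
          · rw [dblM_zero_lo (b := g ⟨(m : ℕ), hmN⟩)
              (by simp only [Fin.val_mk]; omega)
              (by rw [hgval, if_neg hu1, if_pos hu2]; omega), zero_mul]
          · rw [dblM_zero_lo (b := g ⟨(m : ℕ), hmN⟩)
              (by simp only [Fin.val_mk]; omega)
              (by rw [hgval, if_neg hu1, if_neg hu2]; omega), zero_mul]
      · rw [padMat_apply_id _ _ _ hmN, if_neg (by simp only [Fin.val_mk]; omega), mul_zero]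
    rw [Fintype.sum_eq_single _ hz]
    have hs : σ (⟨(p₁ : ℕ), hb2⟩ : Fin (3 * N)) = g p₁ := hσ p₁
    rw [conjD, hs, Equiv.Perm.apply_inv_self, hgp1]
    have e1 : padMat M (3 * N) (⟨(p₁ : ℕ), hb2⟩ : Fin (3 * N)) ⟨(c : ℕ), hb1⟩ = x := by
      rw [padMat_apply_lt _ _ _ (by simp only [Fin.val_mk]; omega)
        (by simp only [Fin.val_mk]; omega)]
      rw [show M ⟨((⟨(p₁ : ℕ), hb2⟩ : Fin (3 * N)) : ℕ), by simp only [Fin.val_mk]; omega⟩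
            ⟨((⟨(c : ℕ), hb1⟩ : Fin (3 * N)) : ℕ), by simp only [Fin.val_mk]; omega⟩
          = M p₁ c by congr 1 <;> exact Fin.ext (by simp only [Fin.val_mk])]
      exact hp1
    have e2 : dblM M (⟨(p₁ : ℕ), hb2⟩ : Fin (3 * N)) (⟨(c : ℕ), hb1⟩ : Fin (3 * N)) = x := by
      rw [dblM_ll (by simp only [Fin.val_mk]; omega) (by simp only [Fin.val_mk]; omega)]
      rw [show M ⟨((⟨(p₁ : ℕ), hb2⟩ : Fin (3 * N)) : ℕ), by simp only [Fin.val_mk]; omega⟩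
            ⟨((⟨(c : ℕ), hb1⟩ : Fin (3 * N)) : ℕ), by simp only [Fin.val_mk]; omega⟩
          = M p₁ c by congr 1 <;> exact Fin.ext (by simp only [Fin.val_mk])]
      exact hp1
    rw [e1, e2]
    rcases hx with rfl | rfl <;> norm_num
  · -- entry = y * y
    rw [Matrix.mul_apply]
    have hz : ∀ m : Fin (3 * N), m ≠ ⟨(p₂ : ℕ), hb3⟩ →
        conjMat σ⁻¹ (dblM M) (σ⁻¹ ⟨N + (p₂ : ℕ), hb5⟩) m *
          padMat M (3 * N) m ⟨(c : ℕ), hb1⟩ = 0 := by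
      intro m hm
      by_cases hmN : (m : ℕ) < N
      · have hs : σ m = g ⟨(m : ℕ), hmN⟩ := hσ ⟨(m : ℕ), hmN⟩
        rw [conjD, hs, Equiv.Perm.apply_inv_self]
        by_cases hu2 : (⟨(m : ℕ), hmN⟩ : Fin N) = p₂
        · exact absurd (Fin.ext (by
            have := congrArg Fin.val hu2
            simp only [Fin.val_mk] at this ⊢
            exact this)) hm
        · by_cases hu1 : (⟨(m : ℕ), hmN⟩ : Fin N) = p₁
          · rw [dblM_zero_mid (b := g ⟨(m : ℕ), hmN⟩)
              (by simp only [Fin.val_mk]; omega) (by simp only [Fin.val_mk]; omega)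
              (by rw [hgval, if_pos hu1]; omega), zero_mul]
          · rw [dblM_zero_mid (b := g ⟨(m : ℕ), hmN⟩)
              (by simp only [Fin.val_mk]; omega) (by simp only [Fin.val_mk]; omega)
              (by rw [hgval, if_neg hu1, if_neg hu2]; omega), zero_mul]
      · rw [padMat_apply_id _ _ _ hmN, if_neg (by simp only [Fin.val_mk]; omega), mul_zero]
    rw [Fintype.sum_eq_single _ hz]
    have hs : σ (⟨(p₂ : ℕ), hb3⟩ : Fin (3 * N)) = g p₂ := hσ p₂
    rw [conjD, hs, Equiv.Perm.apply_inv_self, hgp2]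
    have e1 : padMat M (3 * N) (⟨(p₂ : ℕ), hb3⟩ : Fin (3 * N)) ⟨(c : ℕ), hb1⟩ = y := by
      rw [padMat_apply_lt _ _ _ (by simp only [Fin.val_mk]; omega)
        (by simp only [Fin.val_mk]; omega)]
      rw [show M ⟨((⟨(p₂ : ℕ), hb3⟩ : Fin (3 * N)) : ℕ), by simp only [Fin.val_mk]; omega⟩
            ⟨((⟨(c : ℕ), hb1⟩ : Fin (3 * N)) : ℕ), by simp only [Fin.val_mk]; omega⟩
          = M p₂ c by congr 1 <;> exact Fin.ext (by simp only [Fin.val_mk])]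
      exact hp2
    have e2 : dblM M (⟨N + (p₂ : ℕ), hb5⟩ : Fin (3 * N)) (⟨N + (c : ℕ), hb4⟩ : Fin (3 * N)) = y := by
      rw [dblM_mm (by simp only [Fin.val_mk]; omega) (by simp only [Fin.val_mk]; omega)
        (by simp only [Fin.val_mk]; omega) (by simp only [Fin.val_mk]; omega)]
      rw [show M ⟨((⟨N + (p₂ : ℕ), hb5⟩ : Fin (3 * N)) : ℕ) - N, by simp only [Fin.val_mk]; omega⟩
            ⟨((⟨N + (c : ℕ), hb4⟩ : Fin (3 * N)) : ℕ) - N, by simp only [Fin.val_mk]; omega⟩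
          = M p₂ c by congr 1 <;> exact Fin.ext (by simp only [Fin.val_mk]; omega)]
      exact hp2
    rw [e1, e2]
    rcases hy with rfl | rfl <;> norm_num

set_option maxHeartbeats 1000000 in
lemma combine (C : MatrixClass) (hr : RowPairC C 1 1) (hc : ColPairC C 1 1) :
    ∃ (n : ℕ) (E : Matrix (Fin n) (Fin n) ℤ), E ∈ C.carrier n ∧ ∃ i j, E i j = 2 := by
  obtain ⟨K, X, hX, r, q₁, q₂, hqne, hq1, hq2⟩ := hr
  obtain ⟨L, Y, hY, c, p₁, p₂, hpne, hp1, hp2⟩ := hc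
  have hrK : (r : ℕ) < K := r.isLt
  have hq1K : (q₁ : ℕ) < K := q₁.isLt
  have hq2K : (q₂ : ℕ) < K := q₂.isLt
  have hcL : (c : ℕ) < L := c.isLt
  have hp1L : (p₁ : ℕ) < L := p₁.isLt
  have hp2L : (p₂ : ℕ) < L := p₂.isLt
  have hK : 0 < K := by omega
  have hL : 0 < L := by omega
  have hqvalne : (q₁ : ℕ) ≠ (q₂ : ℕ) := fun hcc => hqne (Fin.ext hcc)
  have hb1 : (q₁ : ℕ) < K + L := by omega
  have hb2 : (q₂ : ℕ) < K + L := by omega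
  have hb3 : (r : ℕ) < K + L := by omega
  have hb4 : (c : ℕ) < K + L := by omega
  have hb6 : (p₁ : ℕ) < K + L := by omega
  have hb7 : (p₂ : ℕ) < K + L := by omega
  set g : Fin L → Fin (K + L) := fun u =>
    if u = p₁ then ⟨(q₁ : ℕ), hb1⟩ else if u = p₂ then ⟨(q₂ : ℕ), hb2⟩
    else ⟨K + (u : ℕ), by omega⟩ with hg
  have hgval : ∀ u : Fin L, ((g u : Fin (K + L)) : ℕ) =
      if u = p₁ then (q₁ : ℕ) else if u = p₂ then (q₂ : ℕ) else K + (u : ℕ) := by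
    intro u; rw [hg]; dsimp only; split_ifs <;> rfl
  have hgp1 : g p₁ = ⟨(q₁ : ℕ), hb1⟩ :=
    Fin.ext (by rw [hgval, if_pos rfl])
  have hgp2 : g p₂ = ⟨(q₂ : ℕ), hb2⟩ :=
    Fin.ext (by rw [hgval, if_neg hpne.symm, if_pos rfl])
  have hginj : Function.Injective g := by
    intro u v huv
    have hv : ((g u : Fin (K + L)) : ℕ) = ((g v : Fin (K + L)) : ℕ) := congrArg Fin.val huv
    rw [hgval, hgval] at hv
    have huL : (u : ℕ) < L := u.isLt
    have hvL : (v : ℕ) < L := v.isLt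
    split_ifs at hv with h1 h2 h3 h4 h5 h6 h7 h8 h9 <;>
      first
        | (exact h1.trans h2.symm)
        | (exact h3.trans h6.symm)
        | (exact h3.trans h5.symm)
        | (exact h1.trans h4.symm)
        | (exact Fin.ext (by omega))
        | (exfalso; omega)
  obtain ⟨σ, hσ⟩ := exists_perm_extend g hginj (by omega)
  have hEmem : padMat X (K + L) * conjMat σ (padMat Y (K + L)) ∈ C.carrier (K + L) :=
    C.mul_mem _ _ (padMat_mem C hX (by omega)) (conjMat_mem C _ (padMat_mem C hY (by omega)))
  refine ⟨K + L, padMat X (K + L) * conjMat σ (padMat Y (K + L)), hEmem,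
    ⟨(r : ℕ), hb3⟩, σ ⟨(c : ℕ), hb4⟩, ?_⟩
  have hinv1 : σ⁻¹ (⟨(q₁ : ℕ), hb1⟩ : Fin (K + L)) = ⟨(p₁ : ℕ), hb6⟩ := by
    have h0 : σ (⟨(p₁ : ℕ), hb6⟩ : Fin (K + L)) = ⟨(q₁ : ℕ), hb1⟩ := by
      rw [show σ (⟨(p₁ : ℕ), hb6⟩ : Fin (K + L)) = g p₁ from hσ p₁, hgp1]
    rw [← h0, Equiv.Perm.inv_apply_self]
  have hinv2 : σ⁻¹ (⟨(q₂ : ℕ), hb2⟩ : Fin (K + L)) = ⟨(p₂ : ℕ), hb7⟩ := by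
    have h0 : σ (⟨(p₂ : ℕ), hb7⟩ : Fin (K + L)) = ⟨(q₂ : ℕ), hb2⟩ := by
      rw [show σ (⟨(p₂ : ℕ), hb7⟩ : Fin (K + L)) = g p₂ from hσ p₂, hgp2]
    rw [← h0, Equiv.Perm.inv_apply_self]
  have hinvc : σ⁻¹ (σ ⟨(c : ℕ), hb4⟩) = ⟨(c : ℕ), hb4⟩ := Equiv.Perm.inv_apply_self σ _
  rw [Matrix.mul_apply]
  have hterm : ∀ m : Fin (K + L),
      padMat X (K + L) ⟨(r : ℕ), hb3⟩ m * conjMat σ (padMat Y (K + L)) m (σ ⟨(c : ℕ), hb4⟩) =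
        (if m = ⟨(q₁ : ℕ), hb1⟩ then 1 else 0) + (if m = ⟨(q₂ : ℕ), hb2⟩ then 1 else 0) := by
    intro m
    rcases eq_or_ne m ⟨(q₁ : ℕ), hb1⟩ with rfl | hm1
    · rw [if_pos rfl, if_neg (fun hcc => hqvalne (by
        have := congrArg Fin.val hcc
        simpa using this))]
      have eX : padMat X (K + L) (⟨(r : ℕ), hb3⟩ : Fin (K + L)) ⟨(q₁ : ℕ), hb1⟩ = 1 := by
        rw [padMat_apply_lt _ _ _ (by simp only [Fin.val_mk]; omega)
          (by simp only [Fin.val_mk]; omega)]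
        rw [show X ⟨((⟨(r : ℕ), hb3⟩ : Fin (K + L)) : ℕ), by simp only [Fin.val_mk]; omega⟩
              ⟨((⟨(q₁ : ℕ), hb1⟩ : Fin (K + L)) : ℕ), by simp only [Fin.val_mk]; omega⟩
            = X r q₁ by congr 1 <;> exact Fin.ext (by simp only [Fin.val_mk])]
        exact hq1
      have eY : conjMat σ (padMat Y (K + L)) (⟨(q₁ : ℕ), hb1⟩ : Fin (K + L))
          (σ ⟨(c : ℕ), hb4⟩) = 1 := by
        show padMat Y (K + L) (σ⁻¹ ⟨(q₁ : ℕ), hb1⟩) (σ⁻¹ (σ ⟨(c : ℕ), hb4⟩)) = 1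
        rw [hinv1, hinvc]
        rw [padMat_apply_lt _ _ _ (by simp only [Fin.val_mk]; omega)
          (by simp only [Fin.val_mk]; omega)]
        rw [show Y ⟨((⟨(p₁ : ℕ), hb6⟩ : Fin (K + L)) : ℕ), by simp only [Fin.val_mk]; omega⟩
              ⟨((⟨(c : ℕ), hb4⟩ : Fin (K + L)) : ℕ), by simp only [Fin.val_mk]; omega⟩
            = Y p₁ c by congr 1 <;> exact Fin.ext (by simp only [Fin.val_mk])]
        exact hp1
      rw [eX, eY]
      norm_num
    rcases eq_or_ne m ⟨(q₂ : ℕ), hb2⟩ with rfl | hm2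
    · rw [if_neg hm1, if_pos rfl]
      have eX : padMat X (K + L) (⟨(r : ℕ), hb3⟩ : Fin (K + L)) ⟨(q₂ : ℕ), hb2⟩ = 1 := by
        rw [padMat_apply_lt _ _ _ (by simp only [Fin.val_mk]; omega)
          (by simp only [Fin.val_mk]; omega)]
        rw [show X ⟨((⟨(r : ℕ), hb3⟩ : Fin (K + L)) : ℕ), by simp only [Fin.val_mk]; omega⟩
              ⟨((⟨(q₂ : ℕ), hb2⟩ : Fin (K + L)) : ℕ), by simp only [Fin.val_mk]; omega⟩
            = X r q₂ by congr 1 <;> exact Fin.ext (by simp only [Fin.val_mk])]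
        exact hq2
      have eY : conjMat σ (padMat Y (K + L)) (⟨(q₂ : ℕ), hb2⟩ : Fin (K + L))
          (σ ⟨(c : ℕ), hb4⟩) = 1 := by
        show padMat Y (K + L) (σ⁻¹ ⟨(q₂ : ℕ), hb2⟩) (σ⁻¹ (σ ⟨(c : ℕ), hb4⟩)) = 1
        rw [hinv2, hinvc]
        rw [padMat_apply_lt _ _ _ (by simp only [Fin.val_mk]; omega)
          (by simp only [Fin.val_mk]; omega)]
        rw [show Y ⟨((⟨(p₂ : ℕ), hb7⟩ : Fin (K + L)) : ℕ), by simp only [Fin.val_mk]; omega⟩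
              ⟨((⟨(c : ℕ), hb4⟩ : Fin (K + L)) : ℕ), by simp only [Fin.val_mk]; omega⟩
            = Y p₂ c by congr 1 <;> exact Fin.ext (by simp only [Fin.val_mk])]
        exact hp2
      rw [eX, eY]
      norm_num
    · rw [if_neg hm1, if_neg hm2, add_zero]
      by_cases hmK : (m : ℕ) < K
      · have eY : conjMat σ (padMat Y (K + L)) m (σ ⟨(c : ℕ), hb4⟩) = 0 := by
          show padMat Y (K + L) (σ⁻¹ m) (σ⁻¹ (σ ⟨(c : ℕ), hb4⟩)) = 0
          rw [hinvc]
          by_cases hσm : ((σ⁻¹ m : Fin (K + L)) : ℕ) < L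
          · exfalso
            have hu : σ (σ⁻¹ m) = g ⟨((σ⁻¹ m : Fin (K + L)) : ℕ), hσm⟩ :=
              hσ ⟨((σ⁻¹ m : Fin (K + L)) : ℕ), hσm⟩
            rw [Equiv.Perm.apply_inv_self] at hu
            have hval : (m : ℕ) = ((g ⟨((σ⁻¹ m : Fin (K + L)) : ℕ), hσm⟩ : Fin (K + L)) : ℕ) :=
              congrArg Fin.val hu
            rw [hgval] at hval
            split_ifs at hval with hc1 hc2
            · exact hm1 (Fin.ext hval)
            · exact hm2 (Fin.ext hval)
            · omega
          · rw [padMat_apply_id _ _ _ hσm, if_neg (by simp only [Fin.val_mk]; omega)]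
        rw [eY, mul_zero]
      · rw [padMat_apply_zero _ _ _ (by simp only [Fin.val_mk]; omega) hmK, zero_mul]
  simp_rw [hterm]
  rw [Finset.sum_add_distrib]
  simp

theorem class_norm_ge_two' (C : MatrixClass)
    (hA : ∃ (k : ℕ) (A : Matrix (Fin k) (Fin k) ℤ), A ∈ C.carrier k ∧ ¬ IsPseudoCopy A)
    (hB : ∃ (k : ℕ) (B : Matrix (Fin k) (Fin k) ℤ), B ∈ C.carrier k ∧ ¬ IsPseudoTransfer B) :
    ∃ (k : ℕ) (M : Matrix (Fin k) (Fin k) ℤ), M ∈ C.carrier k ∧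
      ∃ (i j : Fin k), 2 ≤ |M i j| := by
  by_contra hcon
  push_neg at hcon
  have small : ∀ (k : ℕ) (M : Matrix (Fin k) (Fin k) ℤ), M ∈ C.carrier k →
      ∀ i j, M i j = -1 ∨ M i j = 0 ∨ M i j = 1 := by
    intro k M hM i j
    have h2 := hcon k M hM i j
    have h3 := abs_lt.mp h2
    omega
  obtain ⟨kA, A, hAmem, hA2⟩ := hA
  obtain ⟨kB, B, hBmem, hB2⟩ := hB
  have hrow : RowPairC C 1 1 := by
    rcases not_and_or.mp hA2 with h | h
    · exact absurd (small kA A hAmem) h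
    · push_neg at h
      obtain ⟨i, j₁, j₂, hne1, hne2, hjj⟩ := h
      have hx : A i j₁ = 1 ∨ A i j₁ = -1 := by
        rcases small kA A hAmem i j₁ with h' | h' | h' <;> tauto
      have hy : A i j₂ = 1 ∨ A i j₂ = -1 := by
        rcases small kA A hAmem i j₂ with h' | h' | h' <;> tauto
      exact rowdouble C hx hy ⟨kA, A, hAmem, i, j₁, j₂, hjj, rfl, rfl⟩
  have hcol : ColPairC C 1 1 := by
    rcases not_and_or.mp hB2 with h | h
    · exact absurd (small kB B hBmem) h
    · push_neg at h
      obtain ⟨j, i₁, i₂, hne1, hne2, hii⟩ := h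
      have hx : B i₁ j = 1 ∨ B i₁ j = -1 := by
        rcases small kB B hBmem i₁ j with h' | h' | h' <;> tauto
      have hy : B i₂ j = 1 ∨ B i₂ j = -1 := by
        rcases small kB B hBmem i₂ j with h' | h' | h' <;> tauto
      exact coldouble C hx hy ⟨kB, B, hBmem, j, i₁, i₂, hii, rfl, rfl⟩
  obtain ⟨n, E, hEmem, i, j, hEij⟩ := combine C hrow hcol
  exact absurd (le_of_eq (by rw [hEij]; norm_num)) (not_le.mpr (hcon n E hEmem i j))

end ClassNorm

theorem class_norm_ge_two (C : MatrixClass)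
    (hA : ∃ (k : ℕ) (A : Matrix (Fin k) (Fin k) ℤ), A ∈ C.carrier k ∧ ¬ IsPseudoCopy A)
    (hB : ∃ (k : ℕ) (B : Matrix (Fin k) (Fin k) ℤ), B ∈ C.carrier k ∧ ¬ IsPseudoTransfer B) :
    ∃ (k : ℕ) (M : Matrix (Fin k) (Fin k) ℤ), M ∈ C.carrier k ∧
      ∃ (i j : Fin k), 2 ≤ |M i j| := by
  exact ClassNorm.class_norm_ge_two' C hA hB
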